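/- For the HOW function, the function g(x) = x²/2 - φ(x), where φ(x) = x²/2 for |x| ≤ λ and φ(x) = (σ²/2)(1 - exp((λ² - x²)/σ²)) + λ²/2 for |x| > λ, is convex on ℝ. -/

import Mathlib

private lemma comp_aux {t : Set ℝ} {g f : ℝ → ℝ}
    (hg : ConvexOn ℝ t g) (hg' : MonotoneOn g t)
    (hf : ConvexOn ℝ Set.univ f) (hmaps : ∀ x, f x ∈ t) :
    ConvexOn ℝ Set.univ (fun x => g (f x)) := by
  refine ⟨convex_univ, fun x _ y _ a b ha hb hab => ?_⟩
  calc g (f (a • x + b • y)) ≤ g (a • f x + b • f y) := by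
        refine hg' (hmaps _) (hg.1 (hmaps x) (hmaps y) ha hb hab) ?_
        exact hf.2 trivial trivial ha hb hab
    _ ≤ a • g (f x) + b • g (f y) := hg.2 (hmaps x) (hmaps y) ha hb hab

theorem how_residual_convex (lam sigma : ℝ) (hlam : 0 < lam) (hsigma : 0 < sigma) :
    ConvexOn ℝ Set.univ (fun x : ℝ =>
      x^2/2 - (if |x| ≤ lam then x^2/2
        else (sigma^2/2) * (1 - Real.exp ((lam^2 - x^2)/sigma^2)) + lam^2/2)) := by
  have hs2 : (0:ℝ) < sigma^2 := by positivity
  set ψ : ℝ → ℝ := fun u => u/2 - sigma^2/2 * (1 - Real.exp (-u/sigma^2)) with hψ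
  set m : ℝ → ℝ := fun x => max (x^2 - lam^2) 0 with hm
  have key : ∀ x : ℝ, (x^2/2 - (if |x| ≤ lam then x^2/2
      else (sigma^2/2) * (1 - Real.exp ((lam^2 - x^2)/sigma^2)) + lam^2/2)) = ψ (m x) := by
    intro x
    by_cases h : |x| ≤ lam
    · have hx2 : x^2 ≤ lam^2 := by
        have := sq_abs x
        nlinarith [abs_nonneg x]
      simp only [hm, hψ, if_pos h, max_eq_right (by linarith : x^2 - lam^2 ≤ 0)]
      simp [Real.exp_zero]
    · have hx2 : lam^2 < x^2 := by
        push_neg at h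
        have := sq_abs x
        nlinarith [abs_nonneg x]
      simp only [hm, hψ, if_neg h, max_eq_left (by linarith : (0:ℝ) ≤ x^2 - lam^2)]
      have : -(x^2 - lam^2)/sigma^2 = (lam^2 - x^2)/sigma^2 := by ring
      rw [this]; ring
  -- m is convex
  have hmconv : ConvexOn ℝ Set.univ m := by
    have h1 : ConvexOn ℝ Set.univ (fun x : ℝ => x^2 - lam^2) := by
      have := (Even.convexOn_pow (n := 2) (by decide)).sub
        (concaveOn_const (lam^2) convex_univ)
      exact this.congr (fun x _ => rfl)
    have h2 : ConvexOn ℝ Set.univ (fun _ : ℝ => (0:ℝ)) := convexOn_const 0 convex_univ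
    simpa [hm, Pi.sup_def] using h1.sup h2
  -- ψ is convex on Ici 0
  have hψconv : ConvexOn ℝ (Set.Ici 0) ψ := by
    have haff : ConvexOn ℝ Set.univ (fun u : ℝ => Real.exp (-u/sigma^2)) := by
      have := convexOn_exp.comp_affineMap ((-(sigma^2)⁻¹) • (AffineMap.id ℝ ℝ))
      refine this.congr ?_
      intro x _
      simp [Function.comp, div_eq_mul_inv, neg_mul, mul_comm]
    have h1 : ConvexOn ℝ Set.univ (fun u : ℝ => sigma^2/2 * Real.exp (-u/sigma^2)) := by
      have := haff.smul (c := sigma^2/2) (by positivity)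
      refine this.congr ?_
      intro x _; simp [smul_eq_mul]
    have h2 : ConvexOn ℝ Set.univ (fun u : ℝ => u/2 - sigma^2/2) := by
      refine ⟨convex_univ, fun x _ y _ a b ha hb hab => ?_⟩
      simp only [smul_eq_mul]
      nlinarith
    have := (h2.add h1).congr (g := ψ) ?_
    · exact this.subset (Set.subset_univ _) (convex_Ici 0)
    · intro x _; simp only [Pi.add_apply]; ring
  -- ψ is monotone on Ici 0
  have hmono : MonotoneOn ψ (Set.Ici 0) := by
    intro a ha b hb hab
    simp only [hψ]
    have ha0 : (0:ℝ) ≤ a := ha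
    have hea : Real.exp (-a/sigma^2) ≤ 1 := by
      rw [Real.exp_le_one_iff, neg_div]
      have : (0:ℝ) ≤ a/sigma^2 := by positivity
      linarith
    have heb : Real.exp (-b/sigma^2) = Real.exp (-a/sigma^2) * Real.exp (-(b-a)/sigma^2) := by
      rw [← Real.exp_add]; ring_nf
    have hd : 1 - (b-a)/sigma^2 ≤ Real.exp (-(b-a)/sigma^2) := by
      have := Real.add_one_le_exp (-(b-a)/sigma^2)
      ring_nf at this ⊢
      linarith
    have hepos : 0 < Real.exp (-a/sigma^2) := Real.exp_pos _
    have hdnn : 0 ≤ (b-a)/sigma^2 := by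
      have : 0 ≤ b - a := by linarith
      positivity
    have hexp : Real.exp (-a/sigma^2) - Real.exp (-b/sigma^2) ≤ (b - a)/sigma^2 := by
      rw [heb]
      nlinarith
    have hba : Real.exp (-a/sigma^2) - Real.exp (-b/sigma^2) ≤ (b-a)/sigma^2 := hexp
    rw [le_div_iff₀ hs2] at hba
    nlinarith
  have hmaps : ∀ x, m x ∈ Set.Ici (0:ℝ) := fun x => show (0:ℝ) ≤ max (x^2 - lam^2) 0 from le_max_right _ _
  have hconv : ConvexOn ℝ Set.univ (fun x => ψ (m x)) :=
    comp_aux hψconv hmono hmconv hmaps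
  refine hconv.congr ?_
  intro x _
  exact (key x).symm
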